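/- Let A, B be nonempty compact convex subsets of ℝⁿ. If both s_A − s_B and s_B − s_A are sublinear (support) functions, then A and B are translates of each other: there exists c ∈ ℝⁿ with A = B + {c} and B = A + {−c}, so the gH-difference A ⊖_g B equals the singleton {c}. -/

import Mathlib

open Pointwise
open scoped RealInnerProductSpace

section Aux

variable {n : ℕ}

local notation "E" => EuclideanSpace ℝ (Fin n)

private noncomputable def supp (K : Set E) (p : E) : ℝ :=
  sSup ((fun x => ⟪p, x⟫) '' K)

private lemma bddAbove_supp {K : Set E} (hK : IsCompact K) (p : E) :
    BddAbove ((fun x => ⟪p, x⟫) '' K) :=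
  (hK.image (continuous_const.inner continuous_id)).bddAbove

private lemma le_supp {K : Set E} (hK : IsCompact K) {p : E} {x : E} (hx : x ∈ K) :
    ⟪p, x⟫ ≤ supp K p :=
  le_csSup (bddAbove_supp hK p) (Set.mem_image_of_mem _ hx)

private lemma supp_le {K : Set E} (hK : K.Nonempty) {p : E} {m : ℝ}
    (h : ∀ x ∈ K, ⟪p, x⟫ ≤ m) : supp K p ≤ m :=
  csSup_le (hK.image _) (by rintro _ ⟨x, hx, rfl⟩; exact h x hx)

private lemma supp_zero {K : Set E} (hK : K.Nonempty) : supp K (0 : E) = 0 := by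
  have h : (fun x => ⟪(0 : E), x⟫) '' K = {(0 : ℝ)} := by
    simp only [inner_zero_left]
    exact hK.image_const 0
  rw [supp, h, csSup_singleton]

private lemma sSup_image_add_const {s : Set ℝ} (hs : s.Nonempty) (hb : BddAbove s) (k : ℝ) :
    sSup ((fun y => y + k) '' s) = sSup s + k := by
  obtain ⟨M, hM⟩ := hb
  have hb' : BddAbove ((fun y => y + k) '' s) := by
    refine ⟨M + k, ?_⟩
    rintro _ ⟨x, hx, rfl⟩
    exact add_le_add_left (hM hx) k
  apply le_antisymm
  · refine csSup_le (hs.image _) ?_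
    rintro _ ⟨x, hx, rfl⟩
    exact add_le_add_left (le_csSup ⟨M, hM⟩ hx) k
  · rw [← le_sub_iff_add_le]
    refine csSup_le hs fun x hx => ?_
    rw [le_sub_iff_add_le]
    exact le_csSup hb' (Set.mem_image_of_mem _ hx)

private lemma supp_smul {K : Set E} (hK : K.Nonempty) {t : ℝ} (ht : 0 ≤ t) (p : E) :
    supp K (t • p) = t * supp K p := by
  have h : (fun x => ⟪t • p, x⟫) '' K = t • ((fun x => ⟪p, x⟫) '' K) := by
    rw [← Set.image_smul, ← Set.image_comp]
    refine Set.image_congr fun x _ => ?_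
    simp only [Function.comp_apply, real_inner_smul_left, smul_eq_mul]
  rw [supp, h, Real.sSup_smul_of_nonneg ht, smul_eq_mul, supp]

private lemma supp_add_singleton {K : Set E} (hK : K.Nonempty) (hKc : IsCompact K)
    (p c : E) : supp (K + {c}) p = supp K p + ⟪p, c⟫ := by
  have h : (fun x => ⟪p, x⟫) '' (K + {c}) = (fun y => y + ⟪p, c⟫) '' ((fun x => ⟪p, x⟫) '' K) := by
    rw [Set.add_singleton, ← Set.image_comp, ← Set.image_comp]
    refine Set.image_congr fun x _ => ?_
    simp only [Function.comp_apply, inner_add_right]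
  rw [supp, h, sSup_image_add_const (hK.image _) (bddAbove_supp hKc p), supp]

private lemma subset_of_supp_le {K C : Set E} (hK : IsCompact K)
    (hCv : Convex ℝ C) (hCc : IsClosed C) (hC : C.Nonempty)
    (h : ∀ p, supp K p ≤ supp C p) : K ⊆ C := by
  intro x hx
  by_contra hxC
  obtain ⟨f, u, hf1, hf2⟩ := geometric_hahn_banach_closed_point hCv hCc hxC
  set p : E := (InnerProductSpace.toDual ℝ (EuclideanSpace ℝ (Fin n))).symm f with hp
  have hpa : ∀ a : E, ⟪p, a⟫ = f a := fun a => InnerProductSpace.toDual_symm_apply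
  have h1 : supp C p ≤ u := supp_le hC fun a ha => by rw [hpa]; exact (hf1 a ha).le
  have h2 : ⟪p, x⟫ ≤ supp K p := le_supp hK hx
  rw [hpa] at h2
  linarith [h p]

end Aux

/-- If both s_A − s_B and s_B − s_A are subadditive, then A and B are translates
of each other, so the gH-difference is a singleton. -/
theorem gH_singleton_of_both_subadditive {n : ℕ} (A B : Set (EuclideanSpace ℝ (Fin n)))
    (hA : A.Nonempty) (hAc : IsCompact A) (hAv : Convex ℝ A)
    (hB : B.Nonempty) (hBc : IsCompact B) (hBv : Convex ℝ B)
    (h1 : ∀ p q : EuclideanSpace ℝ (Fin n),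
      sSup ((fun x => ⟪p + q, x⟫) '' A) - sSup ((fun x => ⟪p + q, x⟫) '' B) ≤
        (sSup ((fun x => ⟪p, x⟫) '' A) - sSup ((fun x => ⟪p, x⟫) '' B)) +
        (sSup ((fun x => ⟪q, x⟫) '' A) - sSup ((fun x => ⟪q, x⟫) '' B)))
    (h2 : ∀ p q : EuclideanSpace ℝ (Fin n),
      sSup ((fun x => ⟪p + q, x⟫) '' B) - sSup ((fun x => ⟪p + q, x⟫) '' A) ≤
        (sSup ((fun x => ⟪p, x⟫) '' B) - sSup ((fun x => ⟪p, x⟫) '' A)) +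
        (sSup ((fun x => ⟪q, x⟫) '' B) - sSup ((fun x => ⟪q, x⟫) '' A))) :
    ∃ c : EuclideanSpace ℝ (Fin n), A = B + {c} ∧ B = A + {-c} := by
  set f : EuclideanSpace ℝ (Fin n) → ℝ := fun p => supp A p - supp B p with hf
  have h1' : ∀ p q : EuclideanSpace ℝ (Fin n), f (p + q) ≤ f p + f q := fun p q => by
    have := h1 p q; simp only [hf, supp]; linarith
  have h2' : ∀ p q : EuclideanSpace ℝ (Fin n), -f (p + q) ≤ -f p + -f q := fun p q => by
    have := h2 p q; simp only [hf, supp]; linarith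
  have hf0 : f 0 = 0 := by simp [hf, supp_zero hA, supp_zero hB]
  have hneg : ∀ p : EuclideanSpace ℝ (Fin n), f (-p) = -f p := by
    intro p
    have ha := h1' p (-p)
    have hb := h2' p (-p)
    rw [add_neg_cancel, hf0] at ha hb
    linarith
  have hadd : ∀ p q : EuclideanSpace ℝ (Fin n), f (p + q) = f p + f q := by
    intro p q
    refine le_antisymm (h1' p q) ?_
    have := h1' (-p) (-q)
    rw [← neg_add, hneg, hneg, hneg] at this
    linarith
  have hsmul : ∀ (t : ℝ) (p : EuclideanSpace ℝ (Fin n)), f (t • p) = t * f p := by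
    intro t p
    rcases le_or_gt 0 t with ht | ht
    · simp only [hf]
      rw [supp_smul hA ht, supp_smul hB ht]
      ring
    · have ht' : t • p = (-t) • (-p) := by simp
      have hneg' := hneg p
      simp only [hf] at hneg' ⊢
      rw [ht', supp_smul hA (by linarith : (0:ℝ) ≤ -t), supp_smul hB (by linarith : (0:ℝ) ≤ -t)]
      nlinarith [hneg']
  set F : EuclideanSpace ℝ (Fin n) →ₗ[ℝ] ℝ :=
    { toFun := f, map_add' := hadd, map_smul' := fun t p => by simp [hsmul t p] } with hF
  set Fc : EuclideanSpace ℝ (Fin n) →L[ℝ] ℝ := LinearMap.toContinuousLinearMap F with hFc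
  set c : EuclideanSpace ℝ (Fin n) := (InnerProductSpace.toDual ℝ (EuclideanSpace ℝ (Fin n))).symm Fc with hc
  have hcf : ∀ p : EuclideanSpace ℝ (Fin n), ⟪p, c⟫ = f p := by
    intro p
    rw [real_inner_comm]
    exact InnerProductSpace.toDual_symm_apply
  have hBc' : IsCompact (B + {c}) := hBc.add isCompact_singleton
  have hBv' : Convex ℝ (B + {c}) := hBv.add (convex_singleton c)
  have hB' : (B + {c}).Nonempty := hB.add (Set.singleton_nonempty c)
  have hsupp : ∀ p : EuclideanSpace ℝ (Fin n), supp A p = supp (B + {c}) p := by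
    intro p
    rw [supp_add_singleton hB hBc p c, hcf p, hf]
    ring
  have hAB : A = B + {c} := by
    apply Set.Subset.antisymm
    · exact subset_of_supp_le hAc hBv' hBc'.isClosed hB' fun p => (hsupp p).le
    · exact subset_of_supp_le hBc' hAv hAc.isClosed hA fun p => (hsupp p).ge
  refine ⟨c, hAB, ?_⟩
  rw [hAB, add_assoc, Set.singleton_add_singleton, add_neg_cancel]
  simp
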